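/- Let R be a discrete valuation ring with fraction field K, and let A be a Noetherian commutative R-algebra such that A ⊗_R K is nonzero and reduced, and such that the nilradical of A is a prime ideal (i.e., Spec A is irreducible). Then A is flat as an R-module if and only if A is reduced. -/

import Mathlib

open TensorProduct

/-- **Lemma 1.2 (algebraic local form).**
Let `R` be a DVR with fraction field `K` and `A` a Noetherian commutative
`R`-algebra such that `A ⊗_R K` is nonzero and reduced and the nilradical of
`A` is prime (`Spec A` irreducible).  Then `A` is flat over `R` iff `A` is
reduced. -/
theorem flat_iff_reduced_over_dvr
    {R K A : Type} [CommRing R] [IsDomain R] [IsDiscreteValuationRing R]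
    [Field K] [Algebra R K] [IsFractionRing R K]
    [CommRing A] [Algebra R A] [IsNoetherianRing A]
    (h_nontriv : Nontrivial (A ⊗[R] K))
    (h_red : IsReduced (A ⊗[R] K))
    (h_irr : (nilradical A).IsPrime) :
    Module.Flat R A ↔ IsReduced A := by
  -- `A` is nontrivial
  haveI hAnt : Nontrivial A := by
    by_contra h
    rw [not_nontrivial_iff_subsingleton] at h
    exact false_of_nontrivial_of_subsingleton (A ⊗[R] K)
  -- the structure map `R → A` is injective
  have hinj : Function.Injective (algebraMap R A) := by
    rw [injective_iff_map_eq_zero]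
    intro r hr
    by_contra hrne
    -- in `A ⊗ K`, the element `1 ⊗ algebraMap R K r` equals `algebraMap R A r ⊗ 1 = 0`
    have h1 : (1 : A) ⊗ₜ[R] (algebraMap R K r) = (algebraMap R A r) ⊗ₜ[R] (1 : K) := by
      rw [Algebra.algebraMap_eq_smul_one r (A := K), Algebra.algebraMap_eq_smul_one r (A := A),
        tmul_smul, smul_tmul']
    have h2 : (1 : A) ⊗ₜ[R] (algebraMap R K r) = 0 := by rw [h1, hr, zero_tmul]
    have h3 : IsUnit ((1 : A) ⊗ₜ[R] (algebraMap R K r)) := by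
      have : IsUnit (algebraMap R K r) := isUnit_iff_ne_zero.mpr fun h => hrne
        ((injective_iff_map_eq_zero _).mp (IsFractionRing.injective R K) r h)
      exact this.map (Algebra.TensorProduct.includeRight (R := R) (A := A) (B := K))
    rw [h2] at h3
    exact not_isUnit_zero h3
  constructor
  · -- flat ⇒ reduced : `A` embeds into `A ⊗ K`
    intro hflat
    have h1 : Function.Injective (LinearMap.lTensor A (Algebra.linearMap R K)) :=
      Module.Flat.lTensor_preserves_injective_linearMap _ (IsFractionRing.injective R K)
    have h2 : Function.Injective (Algebra.TensorProduct.includeLeftRingHom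
        (R := R) (A := A) (B := K)) := by
      intro a b hab
      have key : ∀ a : A, (LinearMap.lTensor A (Algebra.linearMap R K))
          ((TensorProduct.rid R A).symm a) = a ⊗ₜ[R] (1 : K) := by
        intro a
        simp [TensorProduct.rid_symm_apply]
      apply (TensorProduct.rid R A).symm.injective
      apply h1
      rw [key, key]
      exact hab
    exact isReduced_of_injective _ h2
  · -- reduced ⇒ flat
    intro hred
    -- `A` is a domain
    have hbot : (⊥ : Ideal A).IsPrime := by
      rwa [nilradical_eq_zero A] at h_irr
    haveI : NoZeroDivisors A :=
      ⟨fun {a b} hab => by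
        simpa [Ideal.mem_bot] using hbot.mem_or_mem (by simp [Ideal.mem_bot, hab])⟩
    haveI : IsDomain A := NoZeroDivisors.to_isDomain A
    haveI : Module.IsTorsionFree R A := Module.isTorsionFree_iff_algebraMap_injective.mpr hinj
    rw [Module.Flat.iff_rTensor_injective' (R := R) (M := A)]
    intro I
    obtain ⟨r, rfl⟩ := (IsPrincipalIdealRing.principal I).principal
    by_cases hr : r = 0
    · haveI : Subsingleton (Submodule.span R ({r} : Set R)) := by
        rw [hr, Submodule.span_zero_singleton]
        infer_instance
      exact Function.injective_of_subsingleton _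
    · set e := LinearEquiv.toSpanNonzeroSingleton R R r hr with he
      have key : (Submodule.span R ({r} : Set R)).subtype ∘ₗ e.toLinearMap
          = r • (LinearMap.id : R →ₗ[R] R) := by
        ext
        show (1 : R) • r = r • (1 : R)
        rw [one_smul, smul_eq_mul, mul_one]
      -- smul by `r` is injective on `R ⊗ A`
      have hsm : Function.Injective (fun x : R ⊗[R] A => r • x) := by
        intro x y hxy
        have h' : r • (TensorProduct.lid R A) x = r • (TensorProduct.lid R A) y := by
          rw [← map_smul, ← map_smul]
          exact congrArg _ hxy
        exact (TensorProduct.lid R A).injective (smul_right_injective A hr h')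
      have h1 : Function.Injective
          (LinearMap.rTensor A ((Submodule.span R ({r} : Set R)).subtype ∘ₗ e.toLinearMap)) := by
        rw [key, LinearMap.rTensor_smul, LinearMap.rTensor_id]
        intro x y hxy
        exact hsm hxy
      rw [LinearMap.rTensor_comp] at h1
      have hsurj : Function.Surjective (LinearMap.rTensor A e.toLinearMap) :=
        (LinearEquiv.rTensor A e).surjective
      intro x y hxy
      obtain ⟨x', rfl⟩ := hsurj x
      obtain ⟨y', rfl⟩ := hsurj y
      exact congrArg _ (h1 hxy)
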